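/- Let F: X → ℝ≥0 be differentiable, monotone, and weakly DR-submodular with parameter γ, and let K ⊆ X be convex. If x ∈ K is a stationary point of F over K (i.e., ⟨∇F(x), y - x⟩ ≤ 0 for all y ∈ K), then F(x) ≥ (γ²/(1+γ²))·sup_{y∈K} F(y). -/

import Mathlib

private lemma line_hasDerivAt {n : ℕ} (F : EuclideanSpace ℝ (Fin n) → ℝ)
    (G : EuclideanSpace ℝ (Fin n)) (p v : EuclideanSpace ℝ (Fin n)) (t : ℝ)
    (h : HasGradientAt F G (p + t • v)) :
    HasDerivAt (fun s => F (p + s • v)) (∑ i, G i * v i) t := by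
  have hL : HasDerivAt (fun s : ℝ => p + s • v) v t := by
    simpa using ((hasDerivAt_id t).smul_const v).const_add p
  have := h.hasFDerivAt.comp_hasDerivAt t hL
  simpa [InnerProductSpace.toDual_apply_apply, PiLp.inner_apply, RCLike.inner_apply,
    mul_comm, Function.comp_def] using this

private lemma mvt_upper {φ ψ : ℝ → ℝ}
    (h : ∀ t ∈ Set.Icc (0:ℝ) 1, HasDerivAt φ (ψ t) t)
    {C : ℝ} (hC : ∀ t ∈ Set.Icc (0:ℝ) 1, ψ t ≤ C) : φ 1 - φ 0 ≤ C := by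
  have hm : MonotoneOn (fun t => C * t - φ t) (Set.Icc 0 1) := by
    apply monotoneOn_of_hasDerivWithinAt_nonneg (f' := fun t => C - ψ t) (convex_Icc 0 1)
    · exact (continuousOn_const.mul continuousOn_id).sub
        (fun t ht => ((h t ht).continuousAt).continuousWithinAt)
    · intro t ht
      have ht' : t ∈ Set.Icc (0:ℝ) 1 := interior_subset ht
      have : HasDerivAt (fun t => C * t - φ t) (C - ψ t) t := by
        exact (((hasDerivAt_id t).const_mul C).sub (h t ht')).congr_deriv (by simp)
      exact this.hasDerivWithinAt
    · intro t ht
      have ht' : t ∈ Set.Icc (0:ℝ) 1 := interior_subset ht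
      linarith [hC t ht']
  have := hm (Set.left_mem_Icc.2 zero_le_one) (Set.right_mem_Icc.2 zero_le_one) zero_le_one
  simp only [mul_one, mul_zero] at this
  linarith

private lemma mvt_lower {φ ψ : ℝ → ℝ}
    (h : ∀ t ∈ Set.Icc (0:ℝ) 1, HasDerivAt φ (ψ t) t)
    {c : ℝ} (hc : ∀ t ∈ Set.Icc (0:ℝ) 1, c ≤ ψ t) : c ≤ φ 1 - φ 0 := by
  have := mvt_upper (φ := fun t => -φ t) (ψ := fun t => -ψ t)
    (fun t ht => (h t ht).neg) (C := -c) (fun t ht => neg_le_neg (hc t ht))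
  linarith

/-- Stationary points of a monotone, weakly DR-submodular function `F`
(with parameter `γ`) over a convex set `K ⊆ X` satisfy
`F x ≥ (γ²/(1+γ²)) · sup_{y ∈ K} F y`. -/
theorem stmt_3 (n : ℕ) (a b : Fin n → ℝ) (ha : ∀ i, 0 ≤ a i)
    (X : Set (EuclideanSpace ℝ (Fin n)))
    (hX : X = {x : EuclideanSpace ℝ (Fin n) | ∀ i, x i ∈ Set.Icc (a i) (b i)})
    (F : EuclideanSpace ℝ (Fin n) → ℝ)
    (g : EuclideanSpace ℝ (Fin n) → EuclideanSpace ℝ (Fin n))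
    (hF0 : ∀ x ∈ X, 0 ≤ F x)
    (hdiff : ∀ x ∈ X, HasGradientAt F (g x) x)
    (hmono : ∀ x ∈ X, ∀ y ∈ X, (∀ i, x i ≤ y i) → F x ≤ F y)
    (γ : ℝ) (hγ : 0 < γ)
    (hweak : ∀ x ∈ X, ∀ y ∈ X, (∀ i, x i ≤ y i) → ∀ i, γ * g y i ≤ g x i)
    (K : Set (EuclideanSpace ℝ (Fin n))) (hKX : K ⊆ X) (hK : Convex ℝ K)
    (hbdd : BddAbove (F '' K))
    (x : EuclideanSpace ℝ (Fin n)) (hx : x ∈ K)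
    (hstat : ∀ y ∈ K, ∑ i, g x i * (y i - x i) ≤ 0) :
    γ ^ 2 / (1 + γ ^ 2) * sSup (F '' K) ≤ F x := by
  have hxX : x ∈ X := hKX hx
  have hγ2 : (0:ℝ) < 1 + γ ^ 2 := by positivity
  -- key bound for each y in K
  have key : ∀ y ∈ K, F y ≤ (1 + γ ^ 2) / γ ^ 2 * F x := by
    intro y hy
    have hyX : y ∈ X := hKX hy
    set u : EuclideanSpace ℝ (Fin n) := WithLp.toLp 2 (fun i => max (x i) (y i)) with hu
    set d : EuclideanSpace ℝ (Fin n) := WithLp.toLp 2 (fun i => min (x i) (y i)) with hd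
    have huX : u ∈ X := by
      rw [hX] at hxX hyX ⊢
      intro i
      exact ⟨le_max_of_le_left (hxX i).1, max_le (hxX i).2 (hyX i).2⟩
    have hdX : d ∈ X := by
      rw [hX] at hxX hyX ⊢
      intro i
      exact ⟨le_min (hxX i).1 (hyX i).1, min_le_of_left_le (hxX i).2⟩
    have hxu : ∀ i, x i ≤ u i := fun i => le_max_left _ _
    have hdx : ∀ i, d i ≤ x i := fun i => min_le_left _ _
    -- points on the two segments lie in X
    have hup : ∀ t ∈ Set.Icc (0:ℝ) 1, x + t • (u - x) ∈ X := by
      intro t ht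
      rw [hX]; rw [hX] at hxX huX
      intro i
      have h1 := (hxX i).1; have h2 := (huX i).2
      have h3 := hxu i
      simp only [PiLp.add_apply, PiLp.smul_apply, PiLp.sub_apply, smul_eq_mul]
      constructor
      · nlinarith [ht.1, ht.2]
      · nlinarith [ht.1, ht.2]
    have hdp : ∀ t ∈ Set.Icc (0:ℝ) 1, d + t • (x - d) ∈ X := by
      intro t ht
      rw [hX]; rw [hX] at hxX hdX
      intro i
      have h1 := (hdX i).1; have h2 := (hxX i).2
      have h3 := hdx i
      simp only [PiLp.add_apply, PiLp.smul_apply, PiLp.sub_apply, smul_eq_mul]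
      constructor
      · nlinarith [ht.1, ht.2]
      · nlinarith [ht.1, ht.2]
    -- points on the up segment dominate x
    have hup_ge : ∀ t ∈ Set.Icc (0:ℝ) 1, ∀ i, x i ≤ (x + t • (u - x)) i := by
      intro t ht i
      simp only [PiLp.add_apply, PiLp.smul_apply, PiLp.sub_apply, smul_eq_mul]
      nlinarith [hxu i, ht.1]
    have hdp_le : ∀ t ∈ Set.Icc (0:ℝ) 1, ∀ i, (d + t • (x - d)) i ≤ x i := by
      intro t ht i
      simp only [PiLp.add_apply, PiLp.smul_apply, PiLp.sub_apply, smul_eq_mul]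
      nlinarith [hdx i, ht.1, ht.2]
    -- bound 1 : F u - F x ≤ (1/γ) * ∑ g x i * (u - x) i
    have bound1 : F u - F x ≤ γ⁻¹ * ∑ i, g x i * (u i - x i) := by
      have hmvt := mvt_upper (φ := fun s => F (x + s • (u - x)))
        (ψ := fun t => ∑ i, g (x + t • (u - x)) i * (u - x) i)
        (fun t ht => line_hasDerivAt F _ x (u - x) t (hdiff _ (hup t ht)))
        (C := γ⁻¹ * ∑ i, g x i * (u i - x i)) ?_
      · simpa using hmvt
      · intro t ht
        rw [Finset.mul_sum]
        apply Finset.sum_le_sum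
        intro i _
        have hw := hweak x hxX _ (hup t ht) (hup_ge t ht) i
        have hnn : 0 ≤ u i - x i := sub_nonneg.2 (hxu i)
        have : g (x + t • (u - x)) i ≤ γ⁻¹ * g x i := by
          rw [le_inv_mul_iff₀ hγ]; linarith
        simp only [PiLp.sub_apply]
        calc g (x + t • (u - x)) i * (u i - x i)
            ≤ (γ⁻¹ * g x i) * (u i - x i) := mul_le_mul_of_nonneg_right this hnn
          _ = γ⁻¹ * (g x i * (u i - x i)) := by ring
    -- bound 2 : γ * ∑ g x i * (x - d) i ≤ F x - F d
    have bound2 : γ * ∑ i, g x i * (x i - d i) ≤ F x - F d := by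
      have hmvt := mvt_lower (φ := fun s => F (d + s • (x - d)))
        (ψ := fun t => ∑ i, g (d + t • (x - d)) i * (x - d) i)
        (fun t ht => line_hasDerivAt F _ d (x - d) t (hdiff _ (hdp t ht)))
        (c := γ * ∑ i, g x i * (x i - d i)) ?_
      · simpa using hmvt
      · intro t ht
        rw [Finset.mul_sum]
        apply Finset.sum_le_sum
        intro i _
        have hw := hweak _ (hdp t ht) x hxX (hdp_le t ht) i
        have hnn : 0 ≤ x i - d i := sub_nonneg.2 (hdx i)
        simp only [PiLp.sub_apply]
        calc γ * (g x i * (x i - d i)) = (γ * g x i) * (x i - d i) := by ring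
          _ ≤ g (d + t • (x - d)) i * (x i - d i) := mul_le_mul_of_nonneg_right hw hnn
    -- stationarity and identity u - x = (y - x) + (x - d)
    have hsum : ∑ i, g x i * (u i - x i)
        = (∑ i, g x i * (y i - x i)) + ∑ i, g x i * (x i - d i) := by
      rw [← Finset.sum_add_distrib]
      apply Finset.sum_congr rfl
      intro i _
      have : u i - x i = (y i - x i) + (x i - d i) := by
        simp only [hu, hd, PiLp.toLp_apply]
        rcases le_total (x i) (y i) with h | h
        · rw [max_eq_right h, min_eq_left h]; ring
        · rw [max_eq_left h, min_eq_right h]; ring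
      rw [this]; ring
    have hst := hstat y hy
    have hFd : 0 ≤ F d := hF0 d hdX
    have hFyu : F y ≤ F u := hmono y hyX u huX (fun i => le_max_right _ _)
    have hA : ∑ i, g x i * (x i - d i) ≤ (F x - F d) / γ := by
      rw [le_div_iff₀ hγ]; linarith [bound2, mul_comm γ (∑ i, g x i * (x i - d i))]
    have hB : ∑ i, g x i * (u i - x i) ≤ (F x - F d) / γ := by
      rw [hsum]; linarith
    have hC : F u - F x ≤ γ⁻¹ * ((F x - F d) / γ) := by
      calc F u - F x ≤ γ⁻¹ * ∑ i, g x i * (u i - x i) := bound1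
        _ ≤ γ⁻¹ * ((F x - F d) / γ) := by
            apply mul_le_mul_of_nonneg_left hB (by positivity)
    have hγ' : γ⁻¹ * ((F x - F d) / γ) = (F x - F d) / γ ^ 2 := by
      rw [pow_two, ← div_div]; ring
    rw [hγ'] at hC
    have : F y ≤ F x + F x / γ ^ 2 := by
      have hdiv : (F x - F d) / γ ^ 2 ≤ F x / γ ^ 2 := by
        gcongr
        linarith
      linarith
    calc F y ≤ F x + F x / γ ^ 2 := this
      _ = (1 + γ ^ 2) / γ ^ 2 * F x := by field_simp; ring
  -- conclude
  have hne : (F '' K).Nonempty := ⟨F x, x, hx, rfl⟩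
  have hsup : sSup (F '' K) ≤ (1 + γ ^ 2) / γ ^ 2 * F x := by
    apply csSup_le hne
    rintro _ ⟨y, hy, rfl⟩
    exact key y hy
  have hpos : (0:ℝ) < γ ^ 2 / (1 + γ ^ 2) := by positivity
  calc γ ^ 2 / (1 + γ ^ 2) * sSup (F '' K)
      ≤ γ ^ 2 / (1 + γ ^ 2) * ((1 + γ ^ 2) / γ ^ 2 * F x) :=
        mul_le_mul_of_nonneg_left hsup hpos.le
    _ = F x := by field_simp
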